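/- In the Weyl algebra over ℂ(b,c), with ℓ(c) = (∂ − (x∂ − c))·x∂, there exists q ∈ D such that (−x∂ + c + 1)·(x(1−x)∂ + c + 1) = (c+1)² + q·ℓ(c). Consequently B = (−x/(c+1))∂ + 1 is a down-step operator inverse (modulo Dℓ(c)) to the up-step operator H = (x(1−x)/(c+1))∂ + 1. -/

import Mathlib

noncomputable def Xop : Module.End ℂ (Polynomial ℂ) := LinearMap.mulLeft ℂ Polynomial.X
noncomputable def Dop : Module.End ℂ (Polynomial ℂ) := Polynomial.derivative
/-- The Euler operator `θ = x∂`. -/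
noncomputable def Th : Module.End ℂ (Polynomial ℂ) := Xop * Dop

/-- The operator `ℓ(c) = (∂ − (x∂ − c))·(x∂)`. -/
noncomputable def lop (c : ℂ) : Module.End ℂ (Polynomial ℂ) :=
  (Dop - (Th - c • 1)) * Th

lemma hDX : Dop * Xop = Xop * Dop + 1 := by
  apply LinearMap.ext; intro p
  simp only [Module.End.mul_apply, LinearMap.add_apply, Module.End.one_apply, Dop, Xop,
    LinearMap.mulLeft_apply]
  simp [Polynomial.derivative_mul]
  ring

lemma weyl_main {R : Type*} [Ring R] [Algebra ℂ R] (a d : R)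
    (h : d * a = a * d + 1) (c : ℂ) :
    (-(a * d) + (c + 1) • (1:R)) * (a * (1 - a) * d + (c + 1) • 1)
      = ((c + 1) ^ 2) • 1 + (-a) * ((d - (a * d - c • 1)) * (a * d)) := by
  have h1 : ∀ x : R, d * (a * x) = a * (d * x) + x := by
    intro x
    rw [← mul_assoc, h, add_mul, one_mul, mul_assoc]
  have h2 : d * a = a * d + 1 := h
  noncomm_ring
  simp only [h1, h2, mul_assoc, mul_add, mul_one, smul_mul_assoc, mul_smul_comm,
    nsmul_eq_mul, Nat.cast_ofNat]
  match_scalars <;> (push_cast; try ring) <;> simp [two_smul] <;> ring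

lemma weyl_main2 {R : Type*} [Ring R] [Algebra ℂ R] (a d : R)
    (h : d * a = a * d + 1) (c : ℂ) (hc : c + 1 ≠ 0) :
    ((-(c + 1)⁻¹) • (a * d) + 1) * ((c + 1)⁻¹ • (a * (1 - a) * d) + 1) - 1
      = (((c + 1)⁻¹ * (c + 1)⁻¹) • (-a)) * ((d - (a * d - c • 1)) * (a * d)) := by
  set u := c + 1 with hu
  have e1 : (-u⁻¹) • (a * d) + 1 = u⁻¹ • (-(a * d) + u • (1:R)) := by
    rw [smul_add, smul_smul, inv_mul_cancel₀ hc, one_smul, smul_neg, neg_smul]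
  have e2 : u⁻¹ • (a * (1 - a) * d) + 1 = u⁻¹ • (a * (1 - a) * d + u • (1:R)) := by
    rw [smul_add, smul_smul, inv_mul_cancel₀ hc, one_smul]
  have hsc : u⁻¹ * u⁻¹ * (c + 1) ^ 2 = 1 := by rw [← hu]; field_simp
  rw [e1, e2, smul_mul_assoc, mul_smul_comm, smul_smul, weyl_main a d h c,
    smul_add, smul_smul, hsc, one_smul, add_sub_cancel_left, smul_mul_assoc]

/-- there is `q` in the Weyl algebra `D` with
`(−x∂ + c + 1)·(x(1−x)∂ + c + 1) = (c+1)² + q·ℓ(c)`; consequently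
`B = (−x/(c+1))∂ + 1` is a down-step operator inverse modulo `D·ℓ(c)` to the
up-step operator `H = (x(1−x)/(c+1))∂ + 1`. -/
theorem downstep_syzygy_for_lop (c : ℂ) :
    (∃ q ∈ Algebra.adjoin ℂ {Xop, Dop},
      (-Th + (c + 1) • 1) * (Xop * (1 - Xop) * Dop + (c + 1) • 1)
        = ((c + 1) ^ 2) • 1 + q * lop c) ∧
    (c + 1 ≠ 0 →
      ∃ t ∈ Algebra.adjoin ℂ {Xop, Dop},
        ((-(c + 1)⁻¹) • Th + 1) * ((c + 1)⁻¹ • (Xop * (1 - Xop) * Dop) + 1) - 1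
          = t * lop c) := by
  have hX : Xop ∈ Algebra.adjoin ℂ {Xop, Dop} :=
    Algebra.subset_adjoin (Set.mem_insert _ _)
  constructor
  · exact ⟨-Xop, neg_mem hX, weyl_main Xop Dop hDX c⟩
  · intro hc
    exact ⟨((c + 1)⁻¹ * (c + 1)⁻¹) • (-Xop),
      Subalgebra.smul_mem _ (neg_mem hX) _, weyl_main2 Xop Dop hDX c hc⟩
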